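/- Let L be a modular lattice with a least element 0 that is sectionally of finite height, i.e., for every a ∈ L the interval [0, a] has finite height h(a). Define δ_h : L → ℝ≥0 by δ_h(0) = 0 and δ_h(a) = h(a) − 1 for a ≠ 0. Then (L, δ_h) is a lattice diversity which is strictly monotone: for all nonzero a, b with a < b one has δ_h(a) < δ_h(b). -/

import Mathlib

/-- `(L, δ)` is a lattice diversity: `L` is a lattice with least element `⊥`,
`δ : L → ℝ` is nonnegative, vanishes exactly on `⊥` and the atoms, is monotone,
and is subadditive on non-disjoint elements. -/
def IsLatticeDiversity {L : Type*} [Lattice L] [OrderBot L] (δ : L → ℝ) : Prop :=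
  (∀ a : L, 0 ≤ δ a) ∧
  (∀ a : L, δ a = 0 ↔ a = ⊥ ∨ IsAtom a) ∧
  (∀ a b : L, a ≤ b → δ a ≤ δ b) ∧
  (∀ a b : L, a ⊓ b ≠ ⊥ → δ (a ⊔ b) ≤ δ a + δ b)

open Order

section aux

variable {α β : Type*} [Preorder α] [Preorder β]

lemma aux_val_strictMono {s : Set α} : StrictMono (Subtype.val : s → α) :=
  fun _ _ h => h

lemma aux_height_Iic (x : α) :
    Order.height (⟨x, le_rfl⟩ : Set.Iic x) = Order.height x := by
  apply le_antisymm
  · exact Order.height_le_height_apply_of_strictMono _ aux_val_strictMono _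
  · apply Order.height_le
    intro p hp
    let q : LTSeries (Set.Iic x) := LTSeries.mk p.length
      (fun i => ⟨p i, hp ▸ p.monotone (Fin.le_last i)⟩)
      (fun _ _ hij => Subtype.mk_lt_mk.mpr (p.strictMono hij))
    have hq : q.last ≤ (⟨x, le_rfl⟩ : Set.Iic x) := by
      exact hp.le
    exact Order.length_le_height hq

lemma aux_prod (n : ℕ) : ∀ (s : LTSeries (α × β)), s.length = n →
    Order.height s.last.1 ≠ ⊤ → Order.height s.last.2 ≠ ⊤ →
    (s.length : ℕ∞) ≤ Order.height s.last.1 + Order.height s.last.2 := by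
  induction n with
  | zero => intro s h _ _; simp [h]
  | succ n ih =>
    intro s h h1 h2
    have hne : s.length ≠ 0 := by omega
    have hlt : s.eraseLast.last < s.last := s.eraseLast_last_rel_last hne
    have hle1 : s.eraseLast.last.1 ≤ s.last.1 := hlt.le.1
    have hle2 : s.eraseLast.last.2 ≤ s.last.2 := hlt.le.2
    have e1 : s.eraseLast.length = n := by simp [RelSeries.eraseLast]; omega
    have hf1 : Order.height s.eraseLast.last.1 ≠ ⊤ :=
      fun ht => h1 (top_le_iff.mp (ht ▸ Order.height_mono hle1))
    have hf2 : Order.height s.eraseLast.last.2 ≠ ⊤ :=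
      fun ht => h2 (top_le_iff.mp (ht ▸ Order.height_mono hle2))
    have key := ih s.eraseLast e1 hf1 hf2
    rw [e1] at key
    have hstrict : s.eraseLast.last.1 < s.last.1 ∨ s.eraseLast.last.2 < s.last.2 := by
      rcases Prod.lt_iff.mp hlt with ⟨h', _⟩ | ⟨_, h'⟩
      · exact Or.inl h'
      · exact Or.inr h'
    have hlen : (s.length : ℕ∞) = (n : ℕ∞) + 1 := by
      rw [h]; push_cast; ring
    rcases hstrict with h' | h'
    · have hs : Order.height s.eraseLast.last.1 + 1 ≤ Order.height s.last.1 := by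
        rw [ENat.add_one_le_iff hf1]
        exact Order.height_strictMono h' (lt_of_le_of_lt (Order.height_mono hle1)
          (lt_top_iff_ne_top.mpr h1))
      calc (s.length : ℕ∞) = (n : ℕ∞) + 1 := hlen
        _ ≤ (Order.height s.eraseLast.last.1 + Order.height s.eraseLast.last.2) + 1 := by
            exact add_le_add_left key 1
        _ = (Order.height s.eraseLast.last.1 + 1) + Order.height s.eraseLast.last.2 := by ring
        _ ≤ Order.height s.last.1 + Order.height s.last.2 :=
            add_le_add hs (Order.height_mono hle2)
    · have hs : Order.height s.eraseLast.last.2 + 1 ≤ Order.height s.last.2 := by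
        rw [ENat.add_one_le_iff hf2]
        exact Order.height_strictMono h' (lt_of_le_of_lt (Order.height_mono hle2)
          (lt_top_iff_ne_top.mpr h2))
      calc (s.length : ℕ∞) = (n : ℕ∞) + 1 := hlen
        _ ≤ (Order.height s.eraseLast.last.1 + Order.height s.eraseLast.last.2) + 1 := by
            exact add_le_add_left key 1
        _ = Order.height s.eraseLast.last.1 + (Order.height s.eraseLast.last.2 + 1) := by ring
        _ ≤ Order.height s.last.1 + Order.height s.last.2 :=
            add_le_add (Order.height_mono hle1) hs

lemma aux_height_prod {p : α × β} (h1 : Order.height p.1 ≠ ⊤) (h2 : Order.height p.2 ≠ ⊤) :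
    Order.height p ≤ Order.height p.1 + Order.height p.2 := by
  apply Order.height_le
  intro s hs
  subst hs
  exact aux_prod s.length s rfl h1 h2

end aux

section lat

variable {L : Type*} [Lattice L] [OrderBot L]

lemma aux_icc {m a : L} (hm : m ≠ ⊥) (hma : m ≤ a) (hA : Order.height a ≠ ⊤) :
    Order.height (⟨a, ⟨hma, le_rfl⟩⟩ : Set.Icc m a) + 1 ≤ Order.height a := by
  have hle : Order.height (⟨a, ⟨hma, le_rfl⟩⟩ : Set.Icc m a) ≤ Order.height a :=
    Order.height_le_height_apply_of_strictMono _ aux_val_strictMono _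
  have hfin : Order.height (⟨a, ⟨hma, le_rfl⟩⟩ : Set.Icc m a) ≠ ⊤ :=
    fun ht => hA (top_le_iff.mp (ht ▸ hle))
  obtain ⟨n, hn⟩ : ∃ n : ℕ, Order.height (⟨a, ⟨hma, le_rfl⟩⟩ : Set.Icc m a) = n :=
    ⟨_, (ENat.coe_toNat hfin).symm⟩
  obtain ⟨p, hpl, hplen⟩ := Order.exists_series_of_height_eq_coe _ hn
  let q : LTSeries L := p.map Subtype.val aux_val_strictMono
  have hqhead : (⊥ : L) < q.head := by
    have : m ≤ q.head := p.head.2.1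
    rcases eq_bot_or_bot_lt q.head with h | h
    · exact absurd (le_bot_iff.mp (h ▸ this)) hm
    · exact h
  let r : LTSeries L := q.cons ⊥ hqhead
  have hrlast : r.last ≤ a := by
    have : r.last = q.last := RelSeries.last_cons _ _ _
    rw [this]
    show (p.last : L) ≤ a
    rw [hpl]
  have := Order.length_le_height hrlast
  have hrlen : r.length = n + 1 := by
    simp [r, q, hplen]
  rw [hrlen] at this
  rw [hn]
  exact_mod_cast this

lemma aux_one_le_height {a : L} (ha : a ≠ ⊥) : 1 ≤ Order.height a := by
  have : ((RelSeries.singleton _ (⊥ : L) : LTSeries L).snoc a (Ne.bot_lt ha)).last = a := RelSeries.last_snoc _ _ _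
  have h := Order.length_le_height (le_of_eq this)
  have hl : ((RelSeries.singleton _ (⊥ : L) : LTSeries L).snoc a (Ne.bot_lt ha)).length = 1 := rfl
  rw [hl] at h
  simpa using h

lemma aux_atom_iff {a : L} (ha : a ≠ ⊥) : Order.height a = 1 ↔ IsAtom a := by
  constructor
  · intro h1
    refine ⟨ha, fun b hb => ?_⟩
    have hfb : Order.height b < ⊤ := lt_of_le_of_lt (Order.height_mono hb.le) (by rw [h1]; exact lt_top_iff_ne_top.mpr ENat.one_ne_top)
    have : Order.height b < 1 := h1 ▸ Order.height_strictMono hb hfb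
    have hz : Order.height b = 0 := ENat.lt_one_iff_eq_zero.mp this
    exact (Order.height_eq_zero.mp hz).eq_bot
  · intro hat
    apply le_antisymm _ (aux_one_le_height ha)
    rw [Order.height_eq_iSup_lt_height]
    apply iSup₂_le
    intro b hb
    rw [hat.2 b hb]
    simp

end lat

section modular

variable {L : Type*} [Lattice L] [OrderBot L] [IsModularLattice L]

lemma aux_key (hfin : ∀ a : L, Order.height a ≠ ⊤) {a b : L} (hab : a ⊓ b ≠ ⊥) :
    Order.height (a ⊔ b) + 1 ≤ Order.height a + Order.height b := by
  set c := a ⊔ b with hc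
  set m := a ⊓ b with hm
  have hmem : ∀ x : Set.Iic c, (x.1 ⊔ b) ⊓ a ∈ Set.Icc m a :=
    fun x => ⟨le_inf (le_trans inf_le_right le_sup_right) inf_le_left, inf_le_right⟩
  set f : Set.Iic c → L × Set.Icc m a :=
    fun x => ((x.1 ⊓ b : L), (⟨(x.1 ⊔ b) ⊓ a, hmem x⟩ : Set.Icc m a)) with hf
  have hsm : StrictMono f := by
    intro x y hxy
    have hxy1 : x.1 ≤ y.1 := hxy.le
    apply lt_of_le_of_ne
    · exact Prod.mk_le_mk.mpr ⟨inf_le_inf_right b hxy1,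
        Subtype.mk_le_mk.mpr (inf_le_inf_right a (sup_le_sup_right hxy1 b))⟩
    · intro heq
      have h1 : x.1 ⊓ b = y.1 ⊓ b := congrArg Prod.fst heq
      have h2 : (x.1 ⊔ b) ⊓ a = (y.1 ⊔ b) ⊓ a :=
        Subtype.ext_iff.mp (congrArg Prod.snd heq)
      have hxb : x.1 ⊔ b ≤ a ⊔ b := sup_le x.2 le_sup_right
      have hyb : y.1 ⊔ b ≤ a ⊔ b := sup_le y.2 le_sup_right
      have hx' : a ⊓ (x.1 ⊔ b) ⊔ b = x.1 ⊔ b := by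
        rw [inf_comm, inf_sup_assoc_of_le _ le_sup_right, inf_eq_left.2 hxb]
      have hy' : a ⊓ (y.1 ⊔ b) ⊔ b = y.1 ⊔ b := by
        rw [inf_comm, inf_sup_assoc_of_le _ le_sup_right, inf_eq_left.2 hyb]
      have ez : x.1 ⊔ b = y.1 ⊔ b := by
        rw [← hx', ← hy', inf_comm a (x.1 ⊔ b), inf_comm a (y.1 ⊔ b), h2]
      have hyx : y.1 = x.1 := by
        calc y.1 = y.1 ⊓ (y.1 ⊔ b) := (inf_eq_left.2 le_sup_left).symm
          _ = y.1 ⊓ (x.1 ⊔ b) := by rw [ez]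
          _ = y.1 ⊓ (b ⊔ x.1) := by rw [sup_comm x.1 b]
          _ = y.1 ⊓ b ⊔ x.1 := (inf_sup_assoc_of_le b hxy1).symm
          _ = x.1 ⊓ b ⊔ x.1 := by rw [← h1]
          _ = x.1 := sup_eq_right.2 inf_le_left
      exact absurd (Subtype.ext hyx) hxy.ne'
  have h0 : Order.height c = Order.height (⟨c, le_rfl⟩ : Set.Iic c) := (aux_height_Iic c).symm
  have h1 := Order.height_le_height_apply_of_strictMono f hsm ⟨c, le_rfl⟩
  have hfc : f ⟨c, le_rfl⟩ = ((b : L), (⟨a, ⟨inf_le_left, le_rfl⟩⟩ : Set.Icc m a)) := by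
    have e1 : c ⊓ b = b := inf_eq_right.2 le_sup_right
    have e2 : (c ⊔ b) ⊓ a = a := by
      rw [sup_eq_left.2 le_sup_right]
      exact inf_eq_right.2 le_sup_left
    simp only [hf]
    exact Prod.ext e1 (Subtype.ext e2)
  rw [hfc] at h1
  have hfa : Order.height (⟨a, ⟨inf_le_left, le_rfl⟩⟩ : Set.Icc m a) ≠ ⊤ := by
    intro ht
    exact hfin a (top_le_iff.mp
      (ht ▸ Order.height_le_height_apply_of_strictMono _ aux_val_strictMono _))
  have h2 : Order.height ((b : L), (⟨a, ⟨inf_le_left, le_rfl⟩⟩ : Set.Icc m a)) ≤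
      Order.height b + Order.height (⟨a, ⟨inf_le_left, le_rfl⟩⟩ : Set.Icc m a) :=
    aux_height_prod (hfin b) hfa
  have h3 : Order.height (⟨a, ⟨inf_le_left, le_rfl⟩⟩ : Set.Icc m a) + 1 ≤ Order.height a :=
    aux_icc hab inf_le_left (hfin a)
  calc Order.height c + 1 ≤ Order.height ((b : L),
        (⟨a, ⟨inf_le_left, le_rfl⟩⟩ : Set.Icc m a)) + 1 := by
        rw [h0]; exact add_le_add_left h1 1
    _ ≤ (Order.height b + Order.height (⟨a, ⟨inf_le_left, le_rfl⟩⟩ : Set.Icc m a)) + 1 :=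
        add_le_add_left h2 1
    _ = Order.height b + (Order.height (⟨a, ⟨inf_le_left, le_rfl⟩⟩ : Set.Icc m a) + 1) := by ring
    _ ≤ Order.height b + Order.height a := add_le_add_right h3 _
    _ = Order.height a + Order.height b := add_comm _ _

end modular


theorem stmt_5 {L : Type*} [Lattice L] [OrderBot L] [IsModularLattice L]
    (hfin : ∀ a : L, Order.height a ≠ ⊤)
    (δ : L → ℝ) (hδbot : δ ⊥ = 0)
    (hδdef : ∀ a : L, a ≠ ⊥ → δ a = ((Order.height a).toNat : ℝ) - 1) :
    IsLatticeDiversity δ ∧ ∀ a b : L, a ≠ ⊥ → b ≠ ⊥ → a < b → δ a < δ b := by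
  have hone : ∀ x : L, x ≠ ⊥ → 1 ≤ (Order.height x).toNat := by
    intro x hx
    have h := aux_one_le_height hx
    have := ENat.toNat_le_toNat h (hfin x)
    simpa using this
  have hnonneg : ∀ x : L, 0 ≤ δ x := by
    intro x
    by_cases hx : x = ⊥
    · rw [hx, hδbot]
    · rw [hδdef x hx]
      have h1 : (1:ℝ) ≤ ((Order.height x).toNat : ℝ) := by exact_mod_cast hone x hx
      linarith
  refine ⟨⟨hnonneg, ?_, ?_, ?_⟩, ?_⟩
  · intro x
    constructor
    · intro h0
      by_cases hx : x = ⊥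
      · exact Or.inl hx
      · right
        rw [hδdef x hx] at h0
        have h1 : ((Order.height x).toNat : ℝ) = 1 := by linarith
        have h2 : (Order.height x).toNat = 1 := by exact_mod_cast h1
        have h3 : Order.height x = 1 := by
          rw [← ENat.coe_toNat (hfin x), h2]; rfl
        exact (aux_atom_iff hx).mp h3
    · rintro (rfl | hat)
      · exact hδbot
      · rw [hδdef x hat.1, (aux_atom_iff hat.1).mpr hat]
        norm_num
  · intro x y hxy
    by_cases hx : x = ⊥
    · rw [hx, hδbot]; exact hnonneg y
    · have hy : y ≠ ⊥ := fun h => hx (le_bot_iff.mp (h ▸ hxy))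
      rw [hδdef x hx, hδdef y hy]
      have h1 := ENat.toNat_le_toNat (Order.height_mono hxy) (hfin y)
      have h2 : ((Order.height x).toNat : ℝ) ≤ ((Order.height y).toNat : ℝ) := by
        exact_mod_cast h1
      linarith
  · intro x y hxy
    have hx : x ≠ ⊥ := fun h => hxy (by simp [h])
    have hy : y ≠ ⊥ := fun h => hxy (by simp [h])
    have hxyne : x ⊔ y ≠ ⊥ := fun h => hx (le_bot_iff.mp (h ▸ le_sup_left))
    have key := aux_key hfin hxy
    rw [← ENat.coe_toNat (hfin (x ⊔ y)), ← ENat.coe_toNat (hfin x),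
      ← ENat.coe_toNat (hfin y)] at key
    have keyn : (Order.height (x ⊔ y)).toNat + 1 ≤
        (Order.height x).toNat + (Order.height y).toNat := by exact_mod_cast key
    rw [hδdef _ hxyne, hδdef x hx, hδdef y hy]
    have keyr : ((Order.height (x ⊔ y)).toNat : ℝ) + 1 ≤
        ((Order.height x).toNat : ℝ) + ((Order.height y).toNat : ℝ) := by exact_mod_cast keyn
    linarith
  · intro x y hx hy hlt
    rw [hδdef x hx, hδdef y hy]
    have h := Order.height_strictMono hlt (lt_top_iff_ne_top.mpr (hfin x))
    rw [← ENat.coe_toNat (hfin x), ← ENat.coe_toNat (hfin y)] at h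
    have h2 : (Order.height x).toNat < (Order.height y).toNat := by exact_mod_cast h
    have h3 : ((Order.height x).toNat : ℝ) < ((Order.height y).toNat : ℝ) := by exact_mod_cast h2
    linarith
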